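/- Let G be a finite set of monotone functions g : ℝ^{n_g} → ℝ (monotone meaning g(x₁,…,x_{n_g}) ≤ g(y₁,…,y_{n_g}) whenever xᵢ ≤ yᵢ for all i), and let P ⊆ ℝ be well-ordered. Then the set F(G,P), defined as the least set containing P and closed under applying each g ∈ G to elements whose g-value strictly exceeds all of them, is well-ordered. -/

import Mathlib

/-- The set `F(G,P)` generated from constants in `P` by the family of functions
`g i : ℝ^(ar i) → ℝ`, applying a function only when its value strictly exceeds
all of its arguments. -/
inductive GenF {ι : Type} (ar : ι → ℕ) (g : ∀ i, (Fin (ar i) → ℝ) → ℝ)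
    (P : Set ℝ) : ℝ → Prop
  | base (p : ℝ) : p ∈ P → GenF ar g P p
  | step (i : ι) (x : Fin (ar i) → ℝ) : (∀ j, GenF ar g P (x j)) →
      (∀ j, x j < g i x) → GenF ar g P (g i x)

section Aux

variable {ι : Type} (ar : ι → ℕ) (g : ∀ i, (Fin (ar i) → ℝ) → ℝ) (P : Set ℝ)

/-- Finite approximation stages of `F(G,P)`. -/
def stage : ℕ → Set ℝ
  | 0 => P
  | n + 1 => stage n ∪
      {y | ∃ i x, (∀ j, x j ∈ stage n) ∧ (∀ j, x j < g i x) ∧ y = g i x}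

lemma stage_mono : ∀ {m n : ℕ}, m ≤ n → stage ar g P m ⊆ stage ar g P n := by
  intro m n h
  induction n with
  | zero => cases Nat.le_zero.mp h; exact fun x hx => hx
  | succ n IH =>
    rcases Nat.lt_succ_iff_lt_or_eq.mp (Nat.lt_succ_of_le h) with h' | h'
    · exact fun x hx => Or.inl (IH (Nat.lt_succ_iff.mp h') hx)
    · subst h'; exact fun x hx => hx

lemma stage_genF : ∀ (n : ℕ) (x : ℝ), x ∈ stage ar g P n → GenF ar g P x := by
  intro n
  induction n with
  | zero => exact fun x hn => GenF.base x hn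
  | succ n IH =>
    rintro x (hn | ⟨i, x', h1, h2, rfl⟩)
    · exact IH _ hn
    · exact GenF.step i x' (fun j => IH _ (h1 j)) h2

lemma genF_iff {x : ℝ} : GenF ar g P x ↔ ∃ n, x ∈ stage ar g P n := by
  constructor
  · intro h
    induction h with
    | base p hp => exact ⟨0, hp⟩
    | step i x hx hlt IH =>
      classical
      set N := Finset.univ.sup fun j : Fin (ar i) => (IH j).choose with hN
      refine ⟨N + 1, Or.inr ⟨i, x, fun j => ?_, hlt, rfl⟩⟩
      exact stage_mono ar g P (Finset.le_sup (Finset.mem_univ j)) (IH j).choose_spec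
  · rintro ⟨n, hn⟩
    exact stage_genF ar g P n x hn

/-- Minimal stage at which `x` appears. -/
noncomputable def rnk (x : ℝ) : ℕ := sInf {n | x ∈ stage ar g P n}

lemma rnk_mem {x : ℝ} (h : GenF ar g P x) : x ∈ stage ar g P (rnk ar g P x) :=
  Nat.sInf_mem ((genF_iff ar g P).mp h)

lemma rnk_le {x : ℝ} {n : ℕ} (h : x ∈ stage ar g P n) : rnk ar g P x ≤ n :=
  Nat.sInf_le h

lemma decompose {x : ℝ} (hx : GenF ar g P x) (hxP : x ∉ P) :
    ∃ i x', x = g i x' ∧ ∀ j, x' j < x ∧ GenF ar g P (x' j) ∧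
      rnk ar g P (x' j) < rnk ar g P x := by
  have hmem := rnk_mem ar g P hx
  rcases hn : rnk ar g P x with _ | m
  · rw [hn] at hmem; exact absurd hmem hxP
  · rw [hn] at hmem
    rcases hmem with hmem | ⟨i, x', h1, h2, hy⟩
    · exact absurd (rnk_le ar g P hmem) (by omega)
    · refine ⟨i, x', hy, fun j => ⟨hy ▸ h2 j, (genF_iff ar g P).mpr ⟨m, h1 j⟩, ?_⟩⟩
      exact Nat.lt_succ_of_le (rnk_le ar g P (h1 j))

/-- Infinite strictly decreasing sequences in `F(G,P)`. -/
def Bad (f : ℕ → ℝ) : Prop := (∀ n, GenF ar g P (f n)) ∧ ∀ n, f (n + 1) < f n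

/-- Values `r` such that some bad sequence agrees with `v` below `n` and has value `r` at `n`. -/
def ExtR (n : ℕ) (v : ℕ → ℝ) : Set ℝ :=
  {r | ∃ f, Bad ar g P f ∧ (∀ k < n, f k = v k) ∧ f n = r}

lemma extR_congr {n : ℕ} {v w : ℕ → ℝ} (h : ∀ k < n, v k = w k) :
    ExtR ar g P n v = ExtR ar g P n w := by
  ext r
  constructor <;> rintro ⟨f, hf, hfv, hfn⟩
  · exact ⟨f, hf, fun k hk => (hfv k hk).trans (h k hk), hfn⟩
  · exact ⟨f, hf, fun k hk => (hfv k hk).trans (h k hk).symm, hfn⟩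

open Classical in
/-- Pick an element of a set of minimal rank (junk value if empty). -/
noncomputable def pickSet (S : Set ℝ) : ℝ :=
  if h : ∃ r, r ∈ S ∧ rnk ar g P r = sInf (rnk ar g P '' S) then h.choose else 0

lemma pickSet_spec {S : Set ℝ} (hne : S.Nonempty) :
    pickSet ar g P S ∈ S ∧ ∀ r ∈ S, rnk ar g P (pickSet ar g P S) ≤ rnk ar g P r := by
  obtain ⟨r, hr, hrEq⟩ := Nat.sInf_mem (hne.image (rnk ar g P))
  have hex : ∃ r, r ∈ S ∧ rnk ar g P r = sInf (rnk ar g P '' S) := ⟨r, hr, hrEq⟩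
  rw [pickSet, dif_pos hex]
  obtain ⟨h1, h2⟩ := hex.choose_spec
  refine ⟨h1, fun s hs => ?_⟩
  rw [h2]
  exact Nat.sInf_le ⟨s, hs, rfl⟩

/-- Pick an element of `ExtR` of minimal rank (junk value if empty). -/
noncomputable def pick (n : ℕ) (v : ℕ → ℝ) : ℝ := pickSet ar g P (ExtR ar g P n v)

lemma pick_congr {n : ℕ} {v w : ℕ → ℝ} (h : ExtR ar g P n v = ExtR ar g P n w) :
    pick ar g P n v = pick ar g P n w := by
  simp only [pick, h]

lemma pick_spec {n : ℕ} {v : ℕ → ℝ} (hne : (ExtR ar g P n v).Nonempty) :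
    pick ar g P n v ∈ ExtR ar g P n v ∧
      ∀ r ∈ ExtR ar g P n v, rnk ar g P (pick ar g P n v) ≤ rnk ar g P r :=
  pickSet_spec ar g P hne

/-- The minimal bad sequence. -/
noncomputable def mseq (n : ℕ) : ℝ :=
  pick ar g P n (fun k => if h : k < n then mseq k else 0)
termination_by n

lemma mseq_eq_pick (n : ℕ) : mseq ar g P n = pick ar g P n (mseq ar g P) := by
  rw [mseq]
  exact pick_congr ar g P (extR_congr ar g P fun k hk => dif_pos hk)

lemma mseq_spec (hbad : ∃ f, Bad ar g P f) (n : ℕ) :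
    mseq ar g P n ∈ ExtR ar g P n (mseq ar g P) ∧
      ∀ r ∈ ExtR ar g P n (mseq ar g P),
        rnk ar g P (mseq ar g P n) ≤ rnk ar g P r := by
  induction n with
  | zero =>
    obtain ⟨f, hf⟩ := hbad
    have hne : (ExtR ar g P 0 (mseq ar g P)).Nonempty :=
      ⟨f 0, f, hf, fun k hk => absurd hk (Nat.not_lt_zero k), rfl⟩
    rw [mseq_eq_pick]; exact pick_spec ar g P hne
  | succ m IH =>
    obtain ⟨f, hf, hfk, hfm⟩ := IH.1
    have hne : (ExtR ar g P (m + 1) (mseq ar g P)).Nonempty := by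
      refine ⟨f (m + 1), f, hf, fun k hk => ?_, rfl⟩
      rcases Nat.lt_succ_iff_lt_or_eq.mp hk with h | h
      · exact hfk k h
      · subst h; exact hfm
    rw [mseq_eq_pick]; exact pick_spec ar g P hne

lemma not_wf_of_desc {s : Set ℝ} (f : ℕ → ℝ) (hf : ∀ n, f (n + 1) < f n)
    (hfs : ∀ n, f n ∈ s) : ¬ s.WellFoundedOn ((· < ·) : ℝ → ℝ → Prop) := by
  intro hwf
  have hanti : StrictAnti f := strictAnti_nat_of_succ_lt hf
  exact Set.wellFoundedOn_iff_no_descending_seq.mp hwf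
    ⟨⟨f, fun a b h => hanti.injective h⟩, fun {a b} => hanti.lt_iff_gt⟩ hfs

lemma pi_subseq : ∀ {m : ℕ} (T : Set ℝ), T.IsPWO → ∀ (y : ℕ → Fin m → ℝ),
    (∀ k j, y k j ∈ T) → ∃ φ : ℕ → ℕ, StrictMono φ ∧
      ∀ (j : Fin m) (k l : ℕ), k ≤ l → y (φ k) j ≤ y (φ l) j := by
  intro m
  induction m with
  | zero => exact fun T _ y _ => ⟨id, strictMono_id, fun j => j.elim0⟩
  | succ m IH =>
    intro T hT y hy
    obtain ⟨φ₁, hφ₁, hm₁⟩ := IH T hT (fun k => y k ∘ Fin.succ) (fun k j => hy k _)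
    obtain ⟨φ₂, hm₂⟩ := hT.exists_monotone_subseq (f := fun k => y (φ₁ k) 0)
      (fun k => hy _ 0)
    refine ⟨φ₁ ∘ φ₂, hφ₁.comp φ₂.strictMono, fun j => ?_⟩
    refine Fin.cases ?_ ?_ j
    · exact fun k l hkl => hm₂ hkl
    · exact fun j' k l hkl => hm₁ j' (φ₂ k) (φ₂ l) (φ₂.monotone hkl)

end Aux

/-- If `G` is a finite set of monotone functions and `P` is well-ordered,
then `F(G,P)` is well-ordered. -/
theorem genF_wellOrdered {ι : Type} [Finite ι] (ar : ι → ℕ)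
    (g : ∀ i, (Fin (ar i) → ℝ) → ℝ) (hmono : ∀ i, Monotone (g i))
    (P : Set ℝ) (hP : P.WellFoundedOn (· < ·)) :
    {x : ℝ | GenF ar g P x}.WellFoundedOn (· < ·) := by
  by_contra hcon
  rw [Set.wellFoundedOn_iff_no_descending_seq] at hcon
  push_neg at hcon
  obtain ⟨e, he⟩ := hcon
  have hbad : ∃ f, Bad ar g P f :=
    ⟨e, fun n => he n, fun n => e.map_rel_iff.2 (Nat.lt_succ_self n)⟩
  have spec := mseq_spec ar g P hbad
  -- basic properties of the minimal bad sequence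
  have hgen : ∀ n, GenF ar g P (mseq ar g P n) := by
    intro n
    obtain ⟨f, hf, hfk, _⟩ := (spec (n + 1)).1
    have := hfk n (Nat.lt_succ_self n)
    rw [← this]; exact hf.1 n
  have hanti : ∀ n, mseq ar g P (n + 1) < mseq ar g P n := by
    intro n
    obtain ⟨f, hf, hfk, hfn⟩ := (spec (n + 1)).1
    rw [← hfn, ← hfk n (Nat.lt_succ_self n)]
    exact hf.2 n
  have hantiS : StrictAnti (mseq ar g P) := strictAnti_nat_of_succ_lt hanti
  -- the set of "subterms" of the minimal bad sequence together with P
  set T : Set ℝ := {x | GenF ar g P x ∧ ∃ n, rnk ar g P x < rnk ar g P (mseq ar g P n) ∧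
      x < mseq ar g P n} ∪ P with hTdef
  have hTsub : ∀ x ∈ T, GenF ar g P x := by
    rintro x (⟨hx, _⟩ | hxP)
    · exact hx
    · exact GenF.base x hxP
  have hT : T.WellFoundedOn ((· < ·) : ℝ → ℝ → Prop) := by
    rw [Set.wellFoundedOn_iff_no_descending_seq]
    intro b hb
    have hbdec : ∀ k, b (k + 1) < b k := fun k => b.map_rel_iff.2 (Nat.lt_succ_self k)
    by_cases hp : ∀ k, b k ∈ P
    · exact not_wf_of_desc b hbdec hp hP
    · push_neg at hp
      obtain ⟨k₀, hk₀⟩ := hp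
      have hbk : b k₀ ∈ {x | GenF ar g P x ∧ ∃ n, rnk ar g P x < rnk ar g P (mseq ar g P n) ∧
          x < mseq ar g P n} := (hb k₀).resolve_right hk₀
      obtain ⟨hgbk, n, hrk, hltk⟩ := hbk
      set f : ℕ → ℝ := fun k => if k < n then mseq ar g P k else b (k₀ + (k - n)) with hfdef
      have hBadf : Bad ar g P f := by
        constructor
        · intro k
          by_cases h : k < n
          · simp only [hfdef, if_pos h]; exact hgen k
          · simp only [hfdef, if_neg h]; exact hTsub _ (hb _)
        · intro k
          by_cases h1 : k + 1 < n
          · have h2 : k < n := by omega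
            simp only [hfdef, if_pos h1, if_pos h2]
            exact hanti k
          · by_cases h2 : k < n
            · have hkn : n = k + 1 := by omega
              simp only [hfdef, if_neg h1, if_pos h2]
              have h3 : k₀ + (k + 1 - n) = k₀ := by omega
              rw [h3]
              calc b k₀ < mseq ar g P n := hltk
                _ < mseq ar g P k := by rw [hkn]; exact hanti k
            · simp only [hfdef, if_neg h1, if_neg h2]
              have h3 : k₀ + (k + 1 - n) = (k₀ + (k - n)) + 1 := by omega
              rw [h3]
              exact hbdec _
      have hmemExt : b k₀ ∈ ExtR ar g P n (mseq ar g P) := by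
        refine ⟨f, hBadf, fun k hk => by simp only [hfdef, if_pos hk], ?_⟩
        simp only [hfdef, if_neg (lt_irrefl n), Nat.sub_self, Nat.add_zero]
      exact absurd ((spec n).2 _ hmemExt) (not_le.2 hrk)
  have hTpwo : T.IsPWO := Set.IsWF.isPWO hT
  -- infinitely many terms of the minimal bad sequence are not in P
  have hNP : {n : ℕ | mseq ar g P n ∉ P}.Infinite := by
    by_contra hfin
    rw [Set.not_infinite] at hfin
    obtain ⟨N, hN⟩ := hfin.bddAbove
    refine not_wf_of_desc (fun k => mseq ar g P (N + 1 + k)) (fun k => ?_) (fun k => ?_) hP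
    · show mseq ar g P (N + 1 + (k + 1)) < mseq ar g P (N + 1 + k)
      have h : N + 1 + (k + 1) = (N + 1 + k) + 1 := by omega
      rw [h]; exact hanti _
    · by_contra hmem
      exact absurd (hN hmem) (by omega)
  -- decompose each such term; pigeonhole to fix the function index
  set Q : ι → ℕ → Prop := fun i n => ∃ x' : Fin (ar i) → ℝ, mseq ar g P n = g i x' ∧
    ∀ j, x' j < mseq ar g P n ∧ GenF ar g P (x' j) ∧
      rnk ar g P (x' j) < rnk ar g P (mseq ar g P n) with hQdef
  have hQ : ∀ n, mseq ar g P n ∉ P → ∃ i, Q i n := by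
    intro n hn
    obtain ⟨i, x', h1, h2⟩ := decompose ar g P (hgen n) hn
    exact ⟨i, x', h1, fun j => by
      obtain ⟨a, b, c⟩ := h2 j; exact ⟨h1 ▸ a, b, h1 ▸ c⟩⟩
  have hex : ∃ i₀, {n | Q i₀ n}.Infinite := by
    by_contra h
    push_neg at h
    have hsub : {n : ℕ | mseq ar g P n ∉ P} ⊆ ⋃ i, {n | Q i n} :=
      fun n hn => Set.mem_iUnion.2 (hQ n hn)
    exact hNP ((Set.finite_iUnion fun i => h i).subset hsub)
  obtain ⟨i₀, hM⟩ := hex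
  set e' : ℕ → ℕ := Nat.nth (fun n => Q i₀ n) with he'def
  have he'mono : StrictMono e' := Nat.nth_strictMono hM
  have he'mem : ∀ k, Q i₀ (e' k) := fun k => Nat.nth_mem_of_infinite hM k
  choose y hy1 hy2 using he'mem
  have hyT : ∀ k j, y k j ∈ T := by
    intro k j
    exact Or.inl ⟨(hy2 k j).2.1, e' k, (hy2 k j).2.2, (hy2 k j).1⟩
  obtain ⟨φ, hφ, hmon⟩ := pi_subseq T hTpwo y hyT
  have h1 : mseq ar g P (e' (φ 1)) < mseq ar g P (e' (φ 0)) :=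
    hantiS (he'mono (hφ Nat.zero_lt_one))
  have h2 : mseq ar g P (e' (φ 0)) ≤ mseq ar g P (e' (φ 1)) := by
    rw [hy1 (φ 0), hy1 (φ 1)]
    exact hmono i₀ (fun j => hmon j 0 1 zero_le_one)
  exact (not_lt.2 h2) h1
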